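/- If a(s)/e^{2γs} → a_∞ as s → +∞ for constants γ > 0 and a_∞ > 0, then g(s)/log s → 1/γ as s → +∞, and g⁻¹(t)/e^{γt} → √a_∞/γ as t → +∞. -/

import Mathlib

open Filter Topology

private lemma int_exp_mul (γ : ℝ) (hγ : γ ≠ 0) (a b : ℝ) :
    ∫ u in a..b, Real.exp (γ * u) = (Real.exp (γ * b) - Real.exp (γ * a)) / γ := by
  have hD : ∀ u : ℝ, HasDerivAt (fun u => Real.exp (γ * u) / γ) (Real.exp (γ * u)) u := by
    intro u
    have h1 : HasDerivAt (fun u : ℝ => γ * u) γ u := by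
      simpa using (hasDerivAt_id u).const_mul γ
    have h3 := ((Real.hasDerivAt_exp (γ * u)).comp u h1).div_const γ
    simpa [mul_div_assoc, mul_div_cancel_right₀, hγ] using h3
  rw [intervalIntegral.integral_eq_sub_of_hasDerivAt (fun u _ => hD u)
    ((Real.continuous_exp.comp (continuous_const.mul continuous_id)).intervalIntegrable a b)]
  ring

private lemma key (h : ℝ → ℝ) (hc : Continuous h) (γ L : ℝ) (hγ : 0 < γ)
    (ht : Tendsto (fun u => h u / Real.exp (γ * u)) atTop (𝓝 L)) :
    Tendsto (fun t => (∫ u in (0:ℝ)..t, h u) / Real.exp (γ * t)) atTop (𝓝 (L / γ)) := by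
  rw [Metric.tendsto_nhds]
  intro ε hε
  set δ := γ * ε / 2 with hδdef
  have hδ : 0 < δ := by positivity
  have hev : ∀ᶠ u in atTop, |h u / Real.exp (γ * u) - L| < δ := by
    have := Metric.tendsto_nhds.1 ht δ hδ
    simpa [Real.dist_eq] using this
  obtain ⟨T, hT⟩ := eventually_atTop.1 hev
  have hEpos : ∀ t : ℝ, 0 < Real.exp (γ * t) := fun t => Real.exp_pos _
  have hub : ∀ u, T ≤ u → h u ≤ (L + δ) * Real.exp (γ * u) := by
    intro u hu
    have h1 := (abs_sub_lt_iff.1 (hT u hu)).1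
    have h2 : h u / Real.exp (γ * u) ≤ L + δ := by linarith
    calc h u = h u / Real.exp (γ * u) * Real.exp (γ * u) := by
          field_simp
      _ ≤ (L + δ) * Real.exp (γ * u) := by
          exact mul_le_mul_of_nonneg_right h2 (hEpos u).le
  have hlb : ∀ u, T ≤ u → (L - δ) * Real.exp (γ * u) ≤ h u := by
    intro u hu
    have h1 := (abs_sub_lt_iff.1 (hT u hu)).2
    have h2 : L - δ ≤ h u / Real.exp (γ * u) := by linarith
    calc (L - δ) * Real.exp (γ * u) ≤ h u / Real.exp (γ * u) * Real.exp (γ * u) :=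
          mul_le_mul_of_nonneg_right h2 (hEpos u).le
      _ = h u := by field_simp
  have hint : ∀ a b : ℝ, IntervalIntegrable h MeasureTheory.volume a b :=
    fun a b => hc.intervalIntegrable a b
  have hintE : ∀ (c a b : ℝ),
      IntervalIntegrable (fun u => c * Real.exp (γ * u)) MeasureTheory.volume a b :=
    fun c a b => (Continuous.intervalIntegrable (by continuity) a b)
  set F : ℝ → ℝ := fun t => ∫ u in (0:ℝ)..t, h u with hF
  have hsplit : ∀ t, F t = F T + ∫ u in T..t, h u := by
    intro t
    rw [hF]
    exact (intervalIntegral.integral_add_adjacent_intervals (hint 0 T) (hint T t)).symm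
  have hcexp : ∀ (c a b : ℝ), (∫ u in a..b, c * Real.exp (γ * u))
      = c * ((Real.exp (γ * b) - Real.exp (γ * a)) / γ) := by
    intro c a b
    rw [intervalIntegral.integral_const_mul, int_exp_mul γ hγ.ne' a b]
  have hIub : ∀ t, T ≤ t →
      F t ≤ F T + (L + δ) * ((Real.exp (γ * t) - Real.exp (γ * T)) / γ) := by
    intro t htT
    rw [hsplit t]
    have h1 : (∫ u in T..t, h u) ≤ ∫ u in T..t, (L + δ) * Real.exp (γ * u) :=
      intervalIntegral.integral_mono_on htT (hint T t) (hintE _ T t) (fun u hu => hub u hu.1)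
    rw [hcexp] at h1
    linarith
  have hIlb : ∀ t, T ≤ t →
      F T + (L - δ) * ((Real.exp (γ * t) - Real.exp (γ * T)) / γ) ≤ F t := by
    intro t htT
    rw [hsplit t]
    have h1 : (∫ u in T..t, (L - δ) * Real.exp (γ * u)) ≤ ∫ u in T..t, h u :=
      intervalIntegral.integral_mono_on htT (hintE _ T t) (hint T t) (fun u hu => hlb u hu.1)
    rw [hcexp] at h1
    linarith
  have hEtop : Tendsto (fun t => Real.exp (γ * t)) atTop atTop :=
    Real.tendsto_exp_atTop.comp (tendsto_id.const_mul_atTop hγ)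
  have hz : ∀ c : ℝ, Tendsto (fun t => c / Real.exp (γ * t)) atTop (𝓝 0) :=
    fun c => tendsto_const_nhds.div_atTop hEtop
  -- upper comparison
  set C1 : ℝ := F T - (L + δ) * Real.exp (γ * T) / γ with hC1
  set C2 : ℝ := F T - (L - δ) * Real.exp (γ * T) / γ with hC2
  have hU : Tendsto (fun t => C1 / Real.exp (γ * t) + (L + δ) / γ) atTop (𝓝 ((L + δ) / γ)) := by
    simpa using (hz C1).add (tendsto_const_nhds (α := ℝ) (x := (L + δ) / γ))
  have hLo : Tendsto (fun t => C2 / Real.exp (γ * t) + (L - δ) / γ) atTop (𝓝 ((L - δ) / γ)) := by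
    simpa using (hz C2).add (tendsto_const_nhds (α := ℝ) (x := (L - δ) / γ))
  have hδγ : δ / γ = ε / 2 := by rw [hδdef]; field_simp
  have hlt1 : (L + δ) / γ < L / γ + ε := by
    rw [add_div]
    linarith [hδγ]
  have hlt2 : L / γ - ε < (L - δ) / γ := by
    rw [sub_div]
    linarith [hδγ]
  have evU := hU.eventually_lt_const hlt1
  have evLo := hLo.eventually_const_lt hlt2
  filter_upwards [eventually_ge_atTop T, evU, evLo] with t h1 h2 h3
  rw [Real.dist_eq, abs_sub_lt_iff]
  have hEt := hEpos t
  have hid1 : (F T + (L + δ) * ((Real.exp (γ * t) - Real.exp (γ * T)) / γ)) / Real.exp (γ * t)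
      = C1 / Real.exp (γ * t) + (L + δ) / γ := by
    rw [hC1]; field_simp; ring
  have hid2 : (F T + (L - δ) * ((Real.exp (γ * t) - Real.exp (γ * T)) / γ)) / Real.exp (γ * t)
      = C2 / Real.exp (γ * t) + (L - δ) / γ := by
    rw [hC2]; field_simp; ring
  have hb1 : F t / Real.exp (γ * t) ≤ C1 / Real.exp (γ * t) + (L + δ) / γ := by
    rw [← hid1]
    exact div_le_div_of_nonneg_right (hIub t h1) hEt.le
  have hb2 : C2 / Real.exp (γ * t) + (L - δ) / γ ≤ F t / Real.exp (γ * t) := by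
    rw [← hid2]
    exact div_le_div_of_nonneg_right (hIlb t h1) hEt.le
  constructor <;> linarith

theorem stmt_3 (a g ginv : ℝ → ℝ) (ha : ContDiff ℝ 1 a) (ν : ℝ) (hν : 0 < ν)
    (hab : ∀ s, ν ≤ a s)
    (hg : ∀ s, HasDerivAt g (1 / Real.sqrt (a (g s))) s) (hg0 : g 0 = 0)
    (hinv1 : ∀ s, ginv (g s) = s) (hinv2 : ∀ t, g (ginv t) = t)
    (γ aInf : ℝ) (hγ : 0 < γ) (haInf : 0 < aInf)
    (haAsym : Tendsto (fun s => a s / Real.exp (2 * γ * s)) atTop (𝓝 aInf)) :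
    Tendsto (fun s => g s / Real.log s) atTop (𝓝 (1 / γ)) ∧
    Tendsto (fun t => ginv t / Real.exp (γ * t)) atTop (𝓝 (Real.sqrt aInf / γ)) := by
  have hapos : ∀ s, 0 < a s := fun s => lt_of_lt_of_le hν (hab s)
  have hsq : ∀ s, 0 < Real.sqrt (a s) := fun s => Real.sqrt_pos.2 (hapos s)
  -- g is strictly monotone and surjective
  have hmono : StrictMono g := by
    apply strictMono_of_deriv_pos
    intro s
    rw [(hg s).deriv]
    exact one_div_pos.2 (hsq _)
  have hsurj : Function.Surjective g := fun t => ⟨ginv t, hinv2 t⟩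
  -- ginv is continuous
  set e := StrictMono.orderIsoOfSurjective g hmono hsurj with he
  have hginv_eq : ginv = ⇑e.symm := by
    funext t
    have h1 : g (e.symm t) = t := by
      have := e.apply_symm_apply t
      rwa [StrictMono.coe_orderIsoOfSurjective] at this
    calc ginv t = ginv (g (e.symm t)) := by rw [h1]
      _ = e.symm t := hinv1 _
  have hginv_cont : Continuous ginv := by
    rw [hginv_eq]; exact OrderIso.continuous e.symm
  -- derivative of ginv
  have hginv_deriv : ∀ t, HasDerivAt ginv (Real.sqrt (a t)) t := by
    intro t
    have hf : HasDerivAt g (1 / Real.sqrt (a t)) (ginv t) := by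
      have := hg (ginv t)
      rwa [hinv2 t] at this
    have hf' : (1 : ℝ) / Real.sqrt (a t) ≠ 0 := ne_of_gt (one_div_pos.2 (hsq t))
    have := HasDerivAt.of_local_left_inverse hginv_cont.continuousAt hf hf'
      (Eventually.of_forall hinv2)
    simpa using this
  have hginv0 : ginv 0 = 0 := by have := hinv1 0; rwa [hg0] at this
  have hcont : Continuous fun u => Real.sqrt (a u) :=
    Real.continuous_sqrt.comp (ha.continuous)
  have hginv_int : ∀ t, ginv t = ∫ u in (0:ℝ)..t, Real.sqrt (a u) := by
    intro t
    rw [intervalIntegral.integral_eq_sub_of_hasDerivAt (fun u _ => hginv_deriv u)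
      (hcont.intervalIntegrable 0 t), hginv0, sub_zero]
  -- asymptotics of sqrt (a u)
  have htend : Tendsto (fun u => Real.sqrt (a u) / Real.exp (γ * u)) atTop
      (𝓝 (Real.sqrt aInf)) := by
    have h1 : Tendsto (fun u => Real.sqrt (a u / Real.exp (2 * γ * u))) atTop
        (𝓝 (Real.sqrt aInf)) := (Real.continuous_sqrt.tendsto aInf).comp haAsym
    refine h1.congr fun u => ?_
    rw [Real.sqrt_div (hapos u).le]
    congr 1
    rw [show (2:ℝ) * γ * u = γ * u + γ * u by ring, Real.exp_add]
    exact Real.sqrt_mul_self (Real.exp_pos _).le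
  -- Part 2
  have P2 : Tendsto (fun t => ginv t / Real.exp (γ * t)) atTop (𝓝 (Real.sqrt aInf / γ)) := by
    have := key (fun u => Real.sqrt (a u)) hcont γ (Real.sqrt aInf) hγ htend
    refine this.congr fun t => ?_
    rw [← hginv_int t]
  refine ⟨?_, P2⟩
  -- Part 1
  have hc : 0 < Real.sqrt aInf / γ := by positivity
  have hgtop : Tendsto g atTop atTop :=
    hmono.monotone.tendsto_atTop_atTop fun b => ⟨ginv b, (hinv2 b).ge⟩
  have hposev : ∀ᶠ t in atTop, 0 < ginv t := by
    have := P2.eventually_const_lt (half_lt_self hc)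
    filter_upwards [this] with t ht
    by_contra hle
    push_neg at hle
    have h2 : ginv t / Real.exp (γ * t) ≤ 0 :=
      div_nonpos_of_nonpos_of_nonneg hle (Real.exp_pos _).le
    linarith [half_pos hc]
  have hlog1 : Tendsto (fun t => Real.log (ginv t / Real.exp (γ * t))) atTop
      (𝓝 (Real.log (Real.sqrt aInf / γ))) := P2.log hc.ne'
  have hlog2 : Tendsto (fun t => Real.log (ginv t) - γ * t) atTop
      (𝓝 (Real.log (Real.sqrt aInf / γ))) := by
    refine hlog1.congr' ?_
    filter_upwards [hposev] with t ht
    rw [Real.log_div ht.ne' (Real.exp_pos _).ne', Real.log_exp]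
  have hlog3 : Tendsto (fun t => Real.log (ginv t) / t) atTop (𝓝 γ) := by
    have h0 : Tendsto (fun t => (Real.log (ginv t) - γ * t) / t) atTop (𝓝 0) :=
      hlog2.div_atTop tendsto_id
    have := h0.add (tendsto_const_nhds (α := ℝ) (x := γ))
    rw [zero_add] at this
    refine this.congr' ?_
    filter_upwards [eventually_gt_atTop 0] with t ht
    field_simp
    ring
  have hcomp : Tendsto (fun s => Real.log s / g s) atTop (𝓝 γ) := by
    have := hlog3.comp hgtop
    refine this.congr fun s => ?_
    simp [Function.comp, hinv1 s]
  have := hcomp.inv₀ hγ.ne'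
  rw [← one_div] at this
  refine this.congr fun s => ?_
  rw [inv_div]
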